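/- Let ω(x), x ∈ [N], be i.i.d. (0,1)-valued with E[(1-ω(1))/ω(1)] < 1. Then there exist constants c > 0 and 0 < r < 1 such that P( max over j ≤ N/4, l ≥ N/2 of ∏_{x=j+1}^{l} (1-ω(x+1))/ω(x) > e^{-cN} ) ≤ r^N for all N large, i.e. the maximum over such products is exponentially small in N with probability tending to 1 exponentially fast. -/

import Mathlib

open MeasureTheory ProbabilityTheory Finset

lemma stmt17_prod_indep {Ω : Type*} [MeasurableSpace Ω] {μ : Measure Ω} [IsProbabilityMeasure μ]
    (Y : ℕ → Ω → ℝ) (hYm : ∀ i, Measurable (Y i))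
    (hind : iIndepFun Y μ)
    (s : Finset ℕ) (hint : ∀ i ∈ s, Integrable (Y i) μ) :
    Integrable (fun w => ∏ i ∈ s, Y i w) μ ∧
      ∫ w, ∏ i ∈ s, Y i w ∂μ = ∏ i ∈ s, ∫ w, Y i w ∂μ := by
  classical
  induction s using Finset.cons_induction with
  | empty => simp
  | cons i s hi ih =>
    obtain ⟨h1, h2⟩ := ih (fun j hj => hint j (Finset.mem_cons_of_mem hj))
    have hYi : Integrable (Y i) μ := hint i (Finset.mem_cons_self i s)
    have hprodeq : (∏ j ∈ s, Y j) = fun w => ∏ j ∈ s, Y j w := by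
      funext w; simp
    have hIndep : IndepFun (fun w => ∏ j ∈ s, Y j w) (Y i) μ := by
      have := hind.indepFun_finset_prod_of_notMem hYm hi
      rwa [hprodeq] at this
    have hmul : Integrable ((fun w => ∏ j ∈ s, Y j w) * Y i) μ :=
      hIndep.integrable_mul h1 hYi
    have hfe : (fun w => ∏ j ∈ Finset.cons i s hi, Y j w)
        = (fun w => ∏ j ∈ s, Y j w) * Y i := by
      funext w; rw [Finset.prod_cons]; simp [mul_comm]
    constructor
    · rw [hfe]; exact hmul
    · rw [hfe]
      have := hIndep.integral_mul_eq_mul_integral h1.aestronglyMeasurable hYi.aestronglyMeasurable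
      rw [Finset.prod_cons, ← h2]
      simpa [mul_comm, Pi.mul_def] using this

lemma stmt17_pair {Ω : Type*} [MeasurableSpace Ω] (μ : Measure Ω) [IsProbabilityMeasure μ]
    (X : ℕ → Ω → ℝ) (hmeas : ∀ n, Measurable (X n))
    (hindep : iIndepFun X μ)
    (hident : ∀ n, IdentDistrib (X n) (X 1) μ μ)
    (hval : ∀ n, ∀ᵐ w ∂μ, 0 < X n w ∧ X n w < 1)
    (hint : Integrable (fun w => (1 - X 1 w) / X 1 w) μ)
    (j l : ℕ) (hjl : j < l) (ε : ℝ) (hε : 0 < ε) :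
    (μ {w | ε < ∏ x ∈ Finset.Icc (j + 1) l, (1 - X (x + 1) w) / X x w}).toReal
      ≤ ε⁻¹ * (((∫ w, (1 - X 1 w) / X 1 w ∂μ) + 1)
          * (∫ w, (1 - X 1 w) / X 1 w ∂μ) ^ (l - j - 1)) := by
  classical
  set m : ℝ := ∫ w, (1 - X 1 w) / X 1 w ∂μ with hm_def
  have ρmeas : Measurable fun t : ℝ => (1 - t) / t :=
    (measurable_const.sub measurable_id).div measurable_id
  have hρ_ident : ∀ n, IdentDistrib (fun w => (1 - X n w) / X n w)
      (fun w => (1 - X 1 w) / X 1 w) μ μ := fun n => (hident n).comp ρmeas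
  have hρ_int : ∀ n, Integrable (fun w => (1 - X n w) / X n w) μ :=
    fun n => (hρ_ident n).integrable_iff.mpr hint
  have hρ_integral : ∀ n, ∫ w, (1 - X n w) / X n w ∂μ = m :=
    fun n => (hρ_ident n).integral_eq
  have hm_nonneg : 0 ≤ m := by
    apply integral_nonneg_of_ae
    filter_upwards [hval 1] with w hw
    exact div_nonneg (by linarith [hw.2]) hw.1.le
  -- the inverse
  have hinv_eq : ∀ n, (fun w => (X n w)⁻¹)
      =ᵐ[μ] fun w => (1 - X n w) / X n w + 1 := by
    intro n
    filter_upwards [hval n] with w hw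
    have h0 : X n w ≠ 0 := ne_of_gt hw.1
    field_simp
    ring
  have hinv_int : ∀ n, Integrable (fun w => (X n w)⁻¹) μ := fun n =>
    (((hρ_int n).add (integrable_const 1)).congr (hinv_eq n).symm)
  have hinv_integral : ∀ n, ∫ w, (X n w)⁻¹ ∂μ = m + 1 := by
    intro n
    rw [integral_congr_ae (hinv_eq n), integral_add (hρ_int n) (integrable_const 1),
      hρ_integral n, integral_const]
    simp
  -- 1 - X n
  have hσ_int : ∀ n, Integrable (fun w => 1 - X n w) μ := by
    intro n
    apply Integrable.mono' (integrable_const (1 : ℝ))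
      ((measurable_const.sub (hmeas n)).aestronglyMeasurable)
    filter_upwards [hval n] with w hw
    simp only [Pi.sub_apply]
    rw [Real.norm_eq_abs, abs_of_nonneg (by linarith [hw.2])]
    linarith [hw.1]
  have hσ_le : ∀ n, ∫ w, 1 - X n w ∂μ ≤ 1 := by
    intro n
    have hle : (fun w => 1 - X n w) ≤ᶠ[ae μ] fun _ => (1 : ℝ) := by
      filter_upwards [hval n] with w hw
      show 1 - X n w ≤ 1
      linarith [hw.1]
    simpa using integral_mono_ae (hσ_int n) (integrable_const 1) hle
  have hσ_nonneg : ∀ n, 0 ≤ ∫ w, 1 - X n w ∂μ := by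
    intro n
    apply integral_nonneg_of_ae
    filter_upwards [hval n] with w hw
    simp only [Pi.zero_apply]
    linarith [hw.2]
  -- the factor functions
  set g : ℕ → ℝ → ℝ := fun x t =>
    if x = j + 1 then t⁻¹ else if x = l + 1 then 1 - t else (1 - t) / t with hg_def
  have hg : ∀ x, Measurable (g x) := by
    intro x
    rw [hg_def]
    dsimp only
    split_ifs
    · exact measurable_inv
    · exact measurable_const.sub measurable_id
    · exact ρmeas
  set Y : ℕ → Ω → ℝ := fun x w => g x (X x w) with hY_def
  have hYind : iIndepFun Y μ := hindep.comp g hg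
  have hY_meas : ∀ x, Measurable (Y x) := fun x => (hg x).comp (hmeas x)
  have hY_int : ∀ x, Integrable (Y x) μ := by
    intro x
    rcases eq_or_ne x (j + 1) with h | h
    · subst h; simpa [hY_def, hg_def] using hinv_int (j + 1)
    · rcases eq_or_ne x (l + 1) with h2 | h2
      · subst h2; simpa [hY_def, hg_def, h, (show l ≠ j by omega)] using hσ_int (l + 1)
      · simpa [hY_def, hg_def, h, h2] using hρ_int x
  have hjl1 : j + 1 ≤ l := hjl
  have hne : j + 1 ≠ l + 1 := by omega
  -- pointwise identity
  have key : ∀ w, (∏ x ∈ Finset.Icc (j + 1) l, (1 - X (x + 1) w) / X x w)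
      = ∏ x ∈ Finset.Icc (j + 1) (l + 1), Y x w := by
    intro w
    have hnum : ∏ x ∈ Finset.Icc (j + 1) l, (1 - X (x + 1) w)
        = (∏ x ∈ Finset.Ioc (j + 1) l, (1 - X x w)) * (1 - X (l + 1) w) := by
      have h1 : ∏ x ∈ Finset.Ioc (j + 1) (l + 1), (1 - X x w)
          = ∏ x ∈ Finset.Icc (j + 1) l, (1 - X (x + 1) w) := by
        rw [show Finset.Ioc (j + 1) (l + 1)
            = (Finset.Icc (j + 1) l).map (addRightEmbedding 1) by
          rw [Finset.map_add_right_Icc, Finset.Icc_add_one_left_eq_Ioc], Finset.prod_map]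
        rfl
      rw [← h1, Finset.prod_Ioc_succ_top (by omega)]
    have hden : ∏ x ∈ Finset.Icc (j + 1) l, X x w
        = X (j + 1) w * ∏ x ∈ Finset.Ioc (j + 1) l, X x w := by
      rw [← Finset.mul_prod_Ioc_eq_prod_Icc hjl1]
    have hrhs : ∏ x ∈ Finset.Icc (j + 1) (l + 1), Y x w
        = (X (j + 1) w)⁻¹ * ((∏ x ∈ Finset.Ioc (j + 1) l, (1 - X x w) / X x w)
            * (1 - X (l + 1) w)) := by
      rw [← Finset.mul_prod_Ioc_eq_prod_Icc (by omega : j + 1 ≤ l + 1),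
        Finset.prod_Ioc_succ_top (by omega : j + 1 ≤ l)]
      have hY1 : Y (j + 1) w = (X (j + 1) w)⁻¹ := by simp [hY_def, hg_def]
      have hY2 : Y (l + 1) w = 1 - X (l + 1) w := by simp [hY_def, hg_def, hne.symm, (show l ≠ j by omega)]
      have hY3 : ∏ x ∈ Finset.Ioc (j + 1) l, Y x w
          = ∏ x ∈ Finset.Ioc (j + 1) l, (1 - X x w) / X x w := by
        apply Finset.prod_congr rfl
        intro x hx
        rw [Finset.mem_Ioc] at hx
        have hx1 : x ≠ j + 1 := by omega
        have hx2 : x ≠ l + 1 := by omega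
        simp [hY_def, hg_def, hx1, hx2]
      rw [hY1, hY2, hY3]
    rw [hrhs, Finset.prod_div_distrib, hnum, hden, Finset.prod_div_distrib,
      div_eq_mul_inv, div_eq_mul_inv, mul_inv]
    ring
  -- integrability and the value of the integral
  obtain ⟨hF_int', hF_val⟩ := stmt17_prod_indep Y hY_meas hYind
    (Finset.Icc (j + 1) (l + 1)) (fun i _ => hY_int i)
  have hFeq : (fun w => ∏ x ∈ Finset.Icc (j + 1) l, (1 - X (x + 1) w) / X x w)
      = fun w => ∏ x ∈ Finset.Icc (j + 1) (l + 1), Y x w := funext key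
  have hF_int : Integrable
      (fun w => ∏ x ∈ Finset.Icc (j + 1) l, (1 - X (x + 1) w) / X x w) μ := by
    rw [hFeq]; exact hF_int'
  -- value of the product of integrals
  have hprod_val : (∏ x ∈ Finset.Icc (j + 1) (l + 1), ∫ w, Y x w ∂μ)
      = (m + 1) * m ^ (l - j - 1) * ∫ w, 1 - X (l + 1) w ∂μ := by
    rw [← Finset.mul_prod_Ioc_eq_prod_Icc (by omega : j + 1 ≤ l + 1),
      Finset.prod_Ioc_succ_top (by omega : j + 1 ≤ l)]
    have hY1 : ∫ w, Y (j + 1) w ∂μ = m + 1 := by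
      simp only [hY_def, hg_def, if_pos rfl]
      exact hinv_integral (j + 1)
    have hY2 : ∫ w, Y (l + 1) w ∂μ = ∫ w, 1 - X (l + 1) w ∂μ := by
      simp [hY_def, hg_def, hne.symm, (show l ≠ j by omega)]
    have hY3 : ∏ x ∈ Finset.Ioc (j + 1) l, ∫ w, Y x w ∂μ = m ^ (l - j - 1) := by
      rw [show (∏ x ∈ Finset.Ioc (j + 1) l, ∫ w, Y x w ∂μ)
          = ∏ x ∈ Finset.Ioc (j + 1) l, m from ?_]
      · rw [Finset.prod_const, Nat.card_Ioc, Nat.sub_sub]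
      · apply Finset.prod_congr rfl
        intro x hx
        rw [Finset.mem_Ioc] at hx
        have hx1 : x ≠ j + 1 := by omega
        have hx2 : x ≠ l + 1 := by omega
        simp only [hY_def, hg_def, if_neg hx1, if_neg hx2]
        exact hρ_integral x
    rw [hY1, hY2, hY3]
    ring
  have hF_le : ∫ w, ∏ x ∈ Finset.Icc (j + 1) l, (1 - X (x + 1) w) / X x w ∂μ
      ≤ (m + 1) * m ^ (l - j - 1) := by
    have : ∫ w, ∏ x ∈ Finset.Icc (j + 1) l, (1 - X (x + 1) w) / X x w ∂μ
        = (m + 1) * m ^ (l - j - 1) * ∫ w, 1 - X (l + 1) w ∂μ := by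
      rw [hFeq, hF_val, hprod_val]
    rw [this]
    have h1 : 0 ≤ (m + 1) * m ^ (l - j - 1) :=
      mul_nonneg (by linarith) (pow_nonneg hm_nonneg _)
    nlinarith [hσ_le (l + 1), hσ_nonneg (l + 1)]
  -- nonnegativity
  have hF_nonneg : 0 ≤ᵐ[μ]
      fun w => ∏ x ∈ Finset.Icc (j + 1) l, (1 - X (x + 1) w) / X x w := by
    filter_upwards [ae_all_iff.mpr hval] with w hw
    simp only [Pi.zero_apply]
    exact Finset.prod_nonneg fun x _ =>
      div_nonneg (by linarith [(hw (x + 1)).2]) (hw x).1.le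
  -- Markov
  have markov := mul_meas_ge_le_integral_of_nonneg hF_nonneg hF_int ε
  have hsub : (μ {w | ε < ∏ x ∈ Finset.Icc (j + 1) l, (1 - X (x + 1) w) / X x w}).toReal
      ≤ (μ {w | ε ≤ ∏ x ∈ Finset.Icc (j + 1) l, (1 - X (x + 1) w) / X x w}).toReal := by
    apply ENNReal.toReal_mono (measure_ne_top μ _)
    apply measure_mono
    intro w hw
    simp only [Set.mem_setOf_eq] at hw ⊢
    exact hw.le
  calc (μ {w | ε < ∏ x ∈ Finset.Icc (j + 1) l, (1 - X (x + 1) w) / X x w}).toReal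
      ≤ (μ {w | ε ≤ ∏ x ∈ Finset.Icc (j + 1) l, (1 - X (x + 1) w) / X x w}).toReal := hsub
    _ ≤ ε⁻¹ * ((m + 1) * m ^ (l - j - 1)) := by
        rw [← mul_le_mul_iff_right₀ hε, ← mul_assoc, mul_inv_cancel₀ hε.ne', one_mul]
        exact le_trans markov hF_le

/-- For i.i.d. `(0,1)`-valued environment variables with `E[(1-ω)/ω] < 1`, the maximum
over `j ≤ N/4`, `N/2 ≤ l ≤ N` of `∏_{x=j+1}^{l} (1-ω(x+1))/ω(x)` exceeds `e^{-cN}`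
with probability at most `r^N`: the maximum is exponentially small in `N`, with
probability tending to one exponentially fast. -/
theorem stmt17 {Ω : Type*} [MeasurableSpace Ω] (μ : Measure Ω) [IsProbabilityMeasure μ]
    (X : ℕ → Ω → ℝ) (hmeas : ∀ n, Measurable (X n))
    (hindep : iIndepFun X μ)
    (hident : ∀ n, IdentDistrib (X n) (X 1) μ μ)
    (hval : ∀ n, ∀ᵐ w ∂μ, 0 < X n w ∧ X n w < 1)
    (hint : Integrable (fun w => (1 - X 1 w) / X 1 w) μ)
    (hdrift : ∫ w, (1 - X 1 w) / X 1 w ∂μ < 1) :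
    ∃ c > (0 : ℝ), ∃ r : ℝ, 0 < r ∧ r < 1 ∧ ∃ N₀ : ℕ, ∀ N ≥ N₀,
      (μ {w | ∃ j l : ℕ, 4 * j ≤ N ∧ N ≤ 2 * l ∧ l ≤ N ∧ j < l ∧
          Real.exp (-(c * N)) <
            ∏ x ∈ Finset.Icc (j + 1) l, (1 - X (x + 1) w) / X x w}).toReal
        ≤ r ^ N := by
  classical
  set m : ℝ := ∫ w, (1 - X 1 w) / X 1 w ∂μ with hm_def
  have hρ_nonneg : 0 ≤ᵐ[μ] fun w => (1 - X 1 w) / X 1 w := by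
    filter_upwards [hval 1] with w hw
    simp only [Pi.zero_apply]
    exact div_nonneg (by linarith [hw.2]) hw.1.le
  have hm_pos : 0 < m := by
    rw [hm_def, integral_pos_iff_support_of_nonneg_ae hρ_nonneg hint]
    by_contra h
    push_neg at h
    have h0 : μ (Function.support fun w => (1 - X 1 w) / X 1 w) = 0 :=
      le_antisymm h bot_le
    have hae : ∀ᵐ w ∂μ, (1 - X 1 w) / X 1 w = 0 := by
      have hset : {w | ¬ (1 - X 1 w) / X 1 w = 0}
          = Function.support fun w => (1 - X 1 w) / X 1 w := by
        ext w; simp [Function.support]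
      rw [ae_iff, hset]
      exact h0
    have hfalse : ∀ᵐ w ∂μ, False := by
      filter_upwards [hae, hval 1] with w h1 h2
      exact absurd h1 (ne_of_gt (div_pos (by linarith [h2.2]) h2.1))
    rw [ae_iff] at hfalse
    simp at hfalse
  have hm1 : m < 1 := hdrift
  have hlogm : Real.log m < 0 := Real.log_neg hm_pos hm1
  set c : ℝ := -Real.log m / 8 with hc_def
  have hc_pos : 0 < c := by rw [hc_def]; linarith
  set q : ℝ := Real.exp (Real.log m / 8) with hq_def
  have hq_pos : 0 < q := Real.exp_pos _
  have hq1 : q < 1 := by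
    rw [hq_def, ← Real.exp_zero]
    exact Real.exp_lt_exp.mpr (by linarith)
  set r : ℝ := (1 + q) / 2 with hr_def
  have hr_pos : 0 < r := by rw [hr_def]; linarith
  have hr1 : r < 1 := by rw [hr_def]; linarith
  have hqr : q < r := by rw [hr_def]; linarith
  set K : ℝ := (m + 1) * m⁻¹ with hK_def
  have hK_pos : 0 < K := mul_pos (by linarith) (inv_pos.mpr hm_pos)
  set t : ℝ := q / r with ht_def
  have ht_pos : 0 < t := div_pos hq_pos hr_pos
  have ht1 : t < 1 := by rw [ht_def, div_lt_one hr_pos]; exact hqr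
  -- tendsto
  have hsum : ∀ k : ℕ, Filter.Tendsto (fun n : ℕ => (n : ℝ) ^ k * t ^ n)
      Filter.atTop (nhds 0) := by
    intro k
    have : ‖t‖ < 1 := by rwa [Real.norm_eq_abs, abs_of_pos ht_pos]
    exact ((summable_norm_pow_mul_geometric_of_norm_lt_one k this).of_norm).tendsto_atTop_zero
  have T : Filter.Tendsto (fun n : ℕ => ((n : ℝ) + 1) ^ 2 * K * t ^ n)
      Filter.atTop (nhds 0) := by
    have h2 := (hsum 2).const_mul K
    have h1 := (hsum 1).const_mul (2 * K)
    have h0 := (hsum 0).const_mul K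
    have hcomb := (h2.add h1).add h0
    have heq : (fun n : ℕ => ((n : ℝ) + 1) ^ 2 * K * t ^ n)
        = fun n : ℕ => K * ((n : ℝ) ^ 2 * t ^ n) + 2 * K * ((n : ℝ) ^ 1 * t ^ n)
          + K * ((n : ℝ) ^ 0 * t ^ n) := by
      funext n; ring
    rw [heq]
    simpa using hcomb
  have hev : ∀ᶠ n : ℕ in Filter.atTop, ((n : ℝ) + 1) ^ 2 * K * t ^ n ≤ 1 :=
    T.eventually (eventually_le_nhds one_pos)
  obtain ⟨N₀, hN₀⟩ := Filter.eventually_atTop.mp hev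
  refine ⟨c, hc_pos, r, hr_pos, hr1, N₀, ?_⟩
  intro N hN
  set S : Finset (ℕ × ℕ) := (Finset.range (N + 1) ×ˢ Finset.range (N + 1)).filter
    (fun p => 4 * p.1 ≤ N ∧ N ≤ 2 * p.2 ∧ p.2 ≤ N ∧ p.1 < p.2) with hS_def
  set A : ℕ × ℕ → Set Ω := fun p =>
    {w | Real.exp (-(c * N)) < ∏ x ∈ Finset.Icc (p.1 + 1) p.2, (1 - X (x + 1) w) / X x w}
    with hA_def
  have hsub : {w | ∃ j l : ℕ, 4 * j ≤ N ∧ N ≤ 2 * l ∧ l ≤ N ∧ j < l ∧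
      Real.exp (-(c * N)) < ∏ x ∈ Finset.Icc (j + 1) l, (1 - X (x + 1) w) / X x w}
      ⊆ ⋃ p ∈ S, A p := by
    intro w hw
    obtain ⟨j, l, h1, h2, h3, h4, h5⟩ := hw
    have hjS : (j, l) ∈ S := by
      simp only [hS_def, Finset.mem_filter, Finset.mem_product, Finset.mem_range]
      exact ⟨⟨by omega, by omega⟩, h1, h2, h3, h4⟩
    exact Set.mem_biUnion hjS h5
  have hμ : μ {w | ∃ j l : ℕ, 4 * j ≤ N ∧ N ≤ 2 * l ∧ l ≤ N ∧ j < l ∧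
      Real.exp (-(c * N)) < ∏ x ∈ Finset.Icc (j + 1) l, (1 - X (x + 1) w) / X x w}
      ≤ ∑ p ∈ S, μ (A p) :=
    le_trans (measure_mono hsub) (measure_biUnion_finset_le S A)
  have hterm : ∀ p ∈ S, (μ (A p)).toReal ≤ K * q ^ N := by
    intro p hp
    simp only [hS_def, Finset.mem_filter, Finset.mem_product, Finset.mem_range] at hp
    obtain ⟨-, h1, h2, h3, h4⟩ := hp
    have hpair := stmt17_pair μ X hmeas hindep hident hval hint p.1 p.2 h4
      (Real.exp (-(c * N))) (Real.exp_pos _)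
    rw [← hm_def] at hpair
    set k : ℕ := p.2 - p.1 - 1 with hk_def
    have hkN : (N : ℝ) ≤ 4 * k + 4 := by
      have : N ≤ 4 * k + 4 := by omega
      exact_mod_cast this
    have hmk : m ^ k = Real.exp (k * Real.log m) := by
      rw [Real.exp_nat_mul, Real.exp_log hm_pos]
    have hinv : (Real.exp (-(c * N)))⁻¹ = Real.exp (c * N) := by
      rw [Real.exp_neg, inv_inv]
    rw [hinv, hmk] at hpair
    refine le_trans hpair ?_
    have hexp1 : Real.exp (c * N) * ((m + 1) * Real.exp (k * Real.log m))
        = (m + 1) * Real.exp (c * N + k * Real.log m) := by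
      rw [Real.exp_add]; ring
    rw [hexp1]
    have hexp2 : c * N + k * Real.log m ≤ N * (Real.log m / 8) - Real.log m := by
      have hk_le : (k : ℝ) * Real.log m ≤ ((N : ℝ) / 4 - 1) * Real.log m := by
        apply mul_le_mul_of_nonpos_right _ hlogm.le
        linarith
      have : c * N + ((N : ℝ) / 4 - 1) * Real.log m
          = N * (Real.log m / 8) - Real.log m := by
        rw [hc_def]; ring
      linarith
    have hexp3 : Real.exp (N * (Real.log m / 8) - Real.log m) = q ^ N * m⁻¹ := by
      rw [Real.exp_sub, Real.exp_log hm_pos, hq_def, ← Real.exp_nat_mul,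
        div_eq_mul_inv]
    calc (m + 1) * Real.exp (c * N + k * Real.log m)
        ≤ (m + 1) * Real.exp (N * (Real.log m / 8) - Real.log m) := by
          apply mul_le_mul_of_nonneg_left (Real.exp_le_exp.mpr hexp2) (by linarith)
      _ = K * q ^ N := by rw [hexp3, hK_def]; ring
  have hcard : (S.card : ℝ) ≤ ((N : ℝ) + 1) ^ 2 := by
    have h1 : S.card ≤ (N + 1) * (N + 1) := by
      calc S.card ≤ ((Finset.range (N + 1)) ×ˢ (Finset.range (N + 1))).card :=
            Finset.card_filter_le _ _
        _ = (N + 1) * (N + 1) := by rw [Finset.card_product, Finset.card_range]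
      
    calc (S.card : ℝ) ≤ ((N + 1) * (N + 1) : ℕ) := by exact_mod_cast h1
      _ = ((N : ℝ) + 1) ^ 2 := by push_cast; ring
  calc (μ {w | ∃ j l : ℕ, 4 * j ≤ N ∧ N ≤ 2 * l ∧ l ≤ N ∧ j < l ∧
      Real.exp (-(c * N)) < ∏ x ∈ Finset.Icc (j + 1) l, (1 - X (x + 1) w) / X x w}).toReal
      ≤ (∑ p ∈ S, μ (A p)).toReal := by
        apply ENNReal.toReal_mono _ hμ
        exact (ENNReal.sum_lt_top.mpr fun p _ => measure_lt_top μ _).ne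
    _ = ∑ p ∈ S, (μ (A p)).toReal := ENNReal.toReal_sum fun p _ => measure_ne_top μ _
    _ ≤ ∑ _p ∈ S, K * q ^ N := Finset.sum_le_sum hterm
    _ = S.card * (K * q ^ N) := by rw [Finset.sum_const, nsmul_eq_mul]
    _ ≤ ((N : ℝ) + 1) ^ 2 * (K * q ^ N) := by
        apply mul_le_mul_of_nonneg_right hcard
        positivity
    _ = (((N : ℝ) + 1) ^ 2 * K * t ^ N) * r ^ N := by
        have hqrt : q = t * r := by
          rw [ht_def, div_mul_cancel₀ _ hr_pos.ne']
        rw [hqrt, mul_pow]; ring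
    _ ≤ 1 * r ^ N := by
        apply mul_le_mul_of_nonneg_right (hN₀ N hN)
        positivity
    _ = r ^ N := one_mul _
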